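/- Let $(a_n)_{n\ge 1}$ be a sequence of complex numbers with $a_1 = 1$ and $\sum_{n=2}^\infty |a_n| \le 1$ (with $a_n = 0$ only allowed as values, i.e., no further restriction). Define $(b_n)$ as the Dirichlet-convolution inverse of $(a_n)$, i.e., $b_1 = 1$ and $\sum_{d\mid n} b_d a_{n/d} = 0$ for $n > 1$. Then for every real $\sigma_0 > 0$ such that $\sum_{n \ge 2} |a_n| n^{-\sigma_0} \le 1$, the series $\sum_{n=1}^\infty |b_n| n^{-\sigma_0}$ converges. -/

import Mathlib

open Finset

/-- If `a 1 = 1`, `∑_{n ≥ 2} ‖a n‖ ≤ 1`, and `(b n)` is the Dirichlet-convolution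
inverse of `(a n)`, then `∑ ‖b n‖ n^{-σ₀}` converges for every `σ₀ > 0` with
`∑_{n ≥ 2} ‖a n‖ n^{-σ₀} ≤ 1`. -/
theorem stmt10 (a b : ℕ → ℂ) (ha1 : a 1 = 1)
    (hasum : Summable fun n : ℕ => ‖a (n + 2)‖)
    (hale : (∑' n : ℕ, ‖a (n + 2)‖) ≤ 1)
    (hb1 : b 1 = 1)
    (hbinv : ∀ n : ℕ, 1 < n → (∑ d ∈ n.divisors, b d * a (n / d)) = 0)
    (σ₀ : ℝ) (hσ₀ : 0 < σ₀)
    (hσ₀sum : Summable fun n : ℕ => ‖a (n + 2)‖ * ((n + 2 : ℝ)) ^ (-σ₀))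
    (hσ₀le : (∑' n : ℕ, ‖a (n + 2)‖ * ((n + 2 : ℝ)) ^ (-σ₀)) ≤ 1) :
    Summable fun n : ℕ => ‖b (n + 1)‖ * ((n + 1 : ℝ)) ^ (-σ₀) := by
  classical
  set g : ℕ → ℝ := fun n => ‖b n‖ * (n : ℝ) ^ (-σ₀) with hgdef
  set f : ℕ → ℝ := fun n => ‖a n‖ * (n : ℝ) ^ (-σ₀) with hfdef
  have hgnn : ∀ n, 0 ≤ g n := fun n =>
    mul_nonneg (norm_nonneg _) (Real.rpow_nonneg (Nat.cast_nonneg n) _)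
  have hfnn : ∀ n, 0 ≤ f n := fun n =>
    mul_nonneg (norm_nonneg _) (Real.rpow_nonneg (Nat.cast_nonneg n) _)
  set α : ℝ := ∑' n : ℕ, ‖a (n + 2)‖ * ((n + 2 : ℝ)) ^ (-σ₀) with hαdef
  have htermnn : ∀ n : ℕ, 0 ≤ ‖a (n + 2)‖ * ((n + 2 : ℝ)) ^ (-σ₀) := fun n =>
    mul_nonneg (norm_nonneg _) (Real.rpow_nonneg (by positivity) _)
  have hαnn : 0 ≤ α := tsum_nonneg htermnn
  -- strict inequality α < 1
  have hαlt : α < 1 := by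
    rcases lt_or_eq_of_le hσ₀le with h | h
    · exact h
    · exfalso
      have hle : ∀ n : ℕ, ‖a (n + 2)‖ * ((n + 2 : ℝ)) ^ (-σ₀) ≤ ‖a (n + 2)‖ := by
        intro n
        have h1 : ((n : ℝ) + 2) ^ (-σ₀) ≤ 1 :=
          Real.rpow_le_one_of_one_le_of_nonpos
            (by linarith [Nat.cast_nonneg (α := ℝ) n]) (by linarith)
        calc ‖a (n + 2)‖ * ((n : ℝ) + 2) ^ (-σ₀) ≤ ‖a (n + 2)‖ * 1 :=
              mul_le_mul_of_nonneg_left h1 (norm_nonneg _)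
          _ = ‖a (n + 2)‖ := mul_one _
      have hzero : ∀ n : ℕ, a (n + 2) = 0 := by
        intro n
        by_contra hn0
        have hpos : 0 < ‖a (n + 2)‖ := norm_pos_iff.mpr hn0
        have h1 : ((n : ℝ) + 2) ^ (-σ₀) < 1 :=
          Real.rpow_lt_one_of_one_lt_of_neg
            (by linarith [Nat.cast_nonneg (α := ℝ) n]) (by linarith)
        have hstrict : ‖a (n + 2)‖ * ((n : ℝ) + 2) ^ (-σ₀) < ‖a (n + 2)‖ := by
          nlinarith [Real.rpow_nonneg (show (0:ℝ) ≤ (n : ℝ) + 2 by positivity) (-σ₀)]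
        have hlt := Summable.tsum_lt_tsum hle hstrict hσ₀sum hasum
        rw [← hαdef, h] at hlt
        linarith
      have hz : α = 0 := by
        rw [hαdef]
        convert tsum_zero with n
        rw [hzero n]
        simp
      rw [hz] at h
      linarith
  have h1α : (0:ℝ) < 1 - α := by linarith
  -- the recursion bound
  have hbrec : ∀ n : ℕ, 2 ≤ n → ‖b n‖ ≤ ∑ d ∈ n.divisors.erase n, ‖b d‖ * ‖a (n / d)‖ := by
    intro n hn
    have hn0 : n ≠ 0 := by omega
    have hmem : n ∈ n.divisors := Nat.mem_divisors_self n hn0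
    have hsum := hbinv n (by omega)
    rw [← Finset.sum_erase_add _ _ hmem, Nat.div_self (by omega : 0 < n), ha1, mul_one] at hsum
    have hbn : b n = -∑ d ∈ n.divisors.erase n, b d * a (n / d) :=
      eq_neg_of_add_eq_zero_right hsum
    calc ‖b n‖ = ‖∑ d ∈ n.divisors.erase n, b d * a (n / d)‖ := by rw [hbn, norm_neg]
      _ ≤ ∑ d ∈ n.divisors.erase n, ‖b d * a (n / d)‖ := norm_sum_le _ _
      _ = ∑ d ∈ n.divisors.erase n, ‖b d‖ * ‖a (n / d)‖ := by simp [norm_mul]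
  have hgrec : ∀ n : ℕ, 2 ≤ n → g n ≤ ∑ d ∈ n.divisors.erase n, g d * f (n / d) := by
    intro n hn
    have hnn : (0:ℝ) ≤ (n : ℝ) ^ (-σ₀) := Real.rpow_nonneg (Nat.cast_nonneg n) _
    calc g n = ‖b n‖ * (n : ℝ) ^ (-σ₀) := rfl
      _ ≤ (∑ d ∈ n.divisors.erase n, ‖b d‖ * ‖a (n / d)‖) * (n : ℝ) ^ (-σ₀) :=
          mul_le_mul_of_nonneg_right (hbrec n hn) hnn
      _ = ∑ d ∈ n.divisors.erase n, ‖b d‖ * ‖a (n / d)‖ * (n : ℝ) ^ (-σ₀) := Finset.sum_mul _ _ _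
      _ = ∑ d ∈ n.divisors.erase n, g d * f (n / d) := by
          refine Finset.sum_congr rfl (fun d hd => ?_)
          have hdvd : d ∣ n := (Nat.mem_divisors.mp (Finset.mem_of_mem_erase hd)).1
          have hd0 : 0 < d := Nat.pos_of_mem_divisors (Finset.mem_of_mem_erase hd)
          have hmul : (n : ℝ) = (d : ℝ) * ((n / d : ℕ) : ℝ) := by
            exact_mod_cast congrArg (Nat.cast : ℕ → ℝ) (Nat.mul_div_cancel' hdvd).symm
          rw [hmul, Real.mul_rpow (by positivity) (by positivity)]
          simp only [hgdef, hfdef]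
          ring
  -- partial sums of f are bounded by α
  have hfpartial : ∀ N : ℕ, ∑ m ∈ Finset.Icc 2 N, f m ≤ α := by
    intro N
    have hIcc : Finset.Icc 2 N = Finset.Ico 2 (N + 1) := by
      rw [Finset.Ico_add_one_right_eq_Icc]
    rw [hIcc, Finset.sum_Ico_eq_sum_range]
    have heq : ∀ i : ℕ, f (2 + i) = ‖a (i + 2)‖ * ((i : ℝ) + 2) ^ (-σ₀) := by
      intro i
      simp only [hfdef]
      rw [add_comm 2 i]
      push_cast
      ring_nf
    calc ∑ i ∈ Finset.range (N + 1 - 2), f (2 + i)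
        = ∑ i ∈ Finset.range (N + 1 - 2), ‖a (i + 2)‖ * ((i : ℝ) + 2) ^ (-σ₀) :=
          Finset.sum_congr rfl (fun i _ => heq i)
      _ ≤ α := Summable.sum_le_tsum _ (fun i _ => htermnn i) hσ₀sum
  -- key reindexing bound
  have key : ∀ N : ℕ, ∑ n ∈ Finset.Icc 2 N, g n ≤ (∑ d ∈ Finset.Icc 1 N, g d) * α := by
    intro N
    have h1 : ∑ n ∈ Finset.Icc 2 N, g n
        ≤ ∑ n ∈ Finset.Icc 2 N, ∑ d ∈ n.divisors.erase n, g d * f (n / d) :=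
      Finset.sum_le_sum (fun n hn => hgrec n (Finset.mem_Icc.mp hn).1)
    set T := (Finset.Icc 2 N).sigma (fun n => n.divisors.erase n) with hT
    set e : (Σ _ : ℕ, ℕ) → ℕ × ℕ := fun p => (p.2, p.1 / p.2) with he
    have hmemT : ∀ p ∈ T, p.2 ∣ p.1 ∧ p.2 ≠ p.1 ∧ 0 < p.2 ∧ 2 ≤ p.1 ∧ p.1 ≤ N := by
      intro p hp
      rw [hT, Finset.mem_sigma] at hp
      obtain ⟨hp1, hp2⟩ := hp
      have h1 := Finset.mem_of_mem_erase hp2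
      refine ⟨(Nat.mem_divisors.mp h1).1, Finset.ne_of_mem_erase hp2,
        Nat.pos_of_mem_divisors h1, (Finset.mem_Icc.mp hp1).1, (Finset.mem_Icc.mp hp1).2⟩
    have hinj : ∀ p ∈ T, ∀ q ∈ T, e p = e q → p = q := by
      intro p hp q hq hpq
      obtain ⟨hpd, -, hp0, -, -⟩ := hmemT p hp
      obtain ⟨hqd, -, hq0, -, -⟩ := hmemT q hq
      simp only [he, Prod.mk.injEq] at hpq
      obtain ⟨h2, h3⟩ := hpq
      have heq1 : p.1 = q.1 := by
        have hp1 : p.1 = p.2 * (p.1 / p.2) := (Nat.mul_div_cancel' hpd).symm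
        have hq1 : q.1 = q.2 * (q.1 / q.2) := (Nat.mul_div_cancel' hqd).symm
        rw [h3, h2, ← hq1] at hp1
        exact hp1
      exact Sigma.ext heq1 (heq_of_eq h2)
    have himg : T.image e ⊆ Finset.Icc 1 N ×ˢ Finset.Icc 2 N := by
      intro q hq
      rw [Finset.mem_image] at hq
      obtain ⟨p, hp, rfl⟩ := hq
      obtain ⟨hpd, hpne, hp0, hp2, hpN⟩ := hmemT p hp
      have hle : p.2 ≤ p.1 := Nat.le_of_dvd (by omega) hpd
      have hdiv1 : 1 ≤ p.1 / p.2 := (Nat.one_le_div_iff hp0).mpr hle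
      have hdivne : p.1 / p.2 ≠ 1 := by
        intro h
        have := Nat.mul_div_cancel' hpd
        rw [h, mul_one] at this
        exact hpne this
      have hdivle : p.1 / p.2 ≤ p.1 := Nat.div_le_self _ _
      simp only [he, Finset.mem_product, Finset.mem_Icc]
      exact ⟨⟨by omega, by omega⟩, ⟨by omega, by omega⟩⟩
    have h2 : ∑ n ∈ Finset.Icc 2 N, ∑ d ∈ n.divisors.erase n, g d * f (n / d)
        ≤ ∑ q ∈ Finset.Icc 1 N ×ˢ Finset.Icc 2 N, g q.1 * f q.2 := by
      rw [Finset.sum_sigma' (Finset.Icc 2 N) (fun n => n.divisors.erase n)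
        (fun n d => g d * f (n / d))]
      have him : ∑ q ∈ T.image e, g q.1 * f q.2 = ∑ p ∈ T, g p.2 * f (p.1 / p.2) := by
        rw [Finset.sum_image hinj]
      rw [← him]
      exact Finset.sum_le_sum_of_subset_of_nonneg himg
        (fun q _ _ => mul_nonneg (hgnn _) (hfnn _))
    have h3 : ∑ q ∈ Finset.Icc 1 N ×ˢ Finset.Icc 2 N, g q.1 * f q.2
        = (∑ d ∈ Finset.Icc 1 N, g d) * (∑ m ∈ Finset.Icc 2 N, f m) := by
      rw [Finset.sum_mul_sum, Finset.sum_product]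
    have h4 : (∑ d ∈ Finset.Icc 1 N, g d) * (∑ m ∈ Finset.Icc 2 N, f m)
        ≤ (∑ d ∈ Finset.Icc 1 N, g d) * α :=
      mul_le_mul_of_nonneg_left (hfpartial N) (Finset.sum_nonneg (fun d _ => hgnn d))
    linarith [h1, h2, h3 ▸ h2]
  -- bounded partial sums
  have hbound : ∀ N : ℕ, ∑ n ∈ Finset.Icc 1 N, g n ≤ (1 - α)⁻¹ := by
    intro N
    rcases Nat.lt_or_ge N 1 with h | h
    · have : N = 0 := by omega
      subst this
      simp only [Finset.Icc_eq_empty_of_lt (by norm_num : (0:ℕ) < 1), Finset.sum_empty]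
      positivity
    · have hsplit : ∑ n ∈ Finset.Icc 1 N, g n = g 1 + ∑ n ∈ Finset.Icc 2 N, g n := by
        rw [Finset.Icc_eq_cons_Ioc h, Finset.sum_cons, ← (show Finset.Icc 2 N = Finset.Ioc 1 N from Finset.Icc_add_one_left_eq_Ioc 1 N)]
      have hg1 : g 1 = 1 := by
        simp only [hgdef, hb1]
        norm_num
      have hk := key N
      have hS : 0 ≤ ∑ n ∈ Finset.Icc 1 N, g n := Finset.sum_nonneg (fun n _ => hgnn n)
      have hSle : (∑ n ∈ Finset.Icc 1 N, g n) ≤ 1 + (∑ n ∈ Finset.Icc 1 N, g n) * α := by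
        linarith [hk, hsplit, hg1]
      have hmul : (∑ n ∈ Finset.Icc 1 N, g n) * (1 - α) ≤ 1 := by nlinarith
      rw [inv_eq_one_div]
      exact (le_div_iff₀ h1α).mpr hmul
  -- conclude summability
  apply summable_of_sum_range_le (c := (1 - α)⁻¹)
  · intro n
    exact mul_nonneg (norm_nonneg _) (Real.rpow_nonneg (by positivity) _)
  · intro N
    have heq : ∑ i ∈ Finset.range N, ‖b (i + 1)‖ * ((i : ℝ) + 1) ^ (-σ₀)
        = ∑ n ∈ Finset.Icc 1 N, g n := by
      rw [show Finset.Icc 1 N = Finset.Ico 1 (N + 1) from (Finset.Ico_add_one_right_eq_Icc 1 N).symm,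
        Finset.sum_Ico_eq_sum_range]
      simp only [Nat.add_sub_cancel]
      refine Finset.sum_congr rfl (fun i _ => ?_)
      simp only [hgdef]
      rw [add_comm 1 i]
      push_cast
      ring_nf
    rw [heq]
    exact hbound N
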